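/- Let P ⊂ ℝⁿ be a convex polytope and K ⊂ ℝⁿ a convex body such that 0 lies in the interior of P ∩ K, and suppose affine subspaces A_F satisfying conditions (a), (b), (c) are chosen for all faces F of P. Then for every face F of P, ⟨x_F, x_{F*}⟩ = ⟨y_F, y_{F*}⟩ = 1. Moreover, for each face F there exist constants c > 0 and δ₀ > 0, depending only on P, F and A_F (not on K), such that if δ := d_H(K,P) ≤ δ₀, then |x_F − c_F| ≤ cδ and |y_F − c_F| ≤ cδ. -/

import Mathlib

open MeasureTheory Set Submodule
open scoped RealInnerProductSpace Pointwise Classical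

noncomputable section

abbrev Euc (n : ℕ) := EuclideanSpace ℝ (Fin n)

variable {n : ℕ}

/-- A convex body: a compact convex set with nonempty interior. -/
def IsConvexBody (K : Set (Euc n)) : Prop :=
  Convex ℝ K ∧ IsCompact K ∧ (interior K).Nonempty

/-- The polar of a set. -/
def polarSet (K : Set (Euc n)) : Set (Euc n) := {y | ∀ x ∈ K, ⟪x, y⟫ ≤ 1}

/-- Volume (as a real number). -/
def vol (A : Set (Euc n)) : ℝ := (volume A).toReal

/-- The volume product of a symmetric convex body. -/
def volProd (K : Set (Euc n)) : ℝ := vol K * vol (polarSet K)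

/-- Banach–Mazur distance between symmetric convex bodies. -/
def bmDist (K L : Set (Euc n)) : ℝ :=
  sInf {c : ℝ | 1 ≤ c ∧ ∃ T : (Euc n) ≃ₗ[ℝ] (Euc n), L ⊆ T '' K ∧ T '' K ⊆ c • L}

/-- The dimension of a set: dimension of the linear span of `A - A`. -/
def setDim (A : Set (Euc n)) : ℕ :=
  Module.finrank ℝ (Submodule.span ℝ (A - A) : Submodule ℝ (Euc n))

/-- Dimension with the convention `dim ∅ = -1`. -/
def edim (A : Set (Euc n)) : ℤ := if A = ∅ then -1 else (setDim A : ℤ)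

/-- ℓ1-sum, with the convention `A ⊕₁ ∅ = A`, `∅ ⊕₁ B = B`. -/
def l1Sum (A B : Set (Euc n)) : Set (Euc n) :=
  if A = ∅ then B else if B = ∅ then A else convexHull ℝ (A ∪ B)

/-- The centroid of a set, computed with respect to the Hausdorff measure of dimension
`setDim A` (this is the Lebesgue measure on the affine hull for convex sets). -/
def centroid (A : Set (Euc n)) : Euc n :=
  ((μH[(setDim A : ℝ)] A).toReal)⁻¹ • ∫ x in A, x ∂(μH[(setDim A : ℝ)])

/-- `F` is a (proper, nonempty) face of `P` cut out by a supporting hyperplane whose normal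
vector lies in `V`. -/
def IsFaceIn (V : Submodule ℝ (Euc n)) (P F : Set (Euc n)) : Prop :=
  ∃ (u : Euc n) (b : ℝ), u ∈ V ∧ u ≠ 0 ∧ (∀ x ∈ P, ⟪x, u⟫ ≤ b) ∧
    (∃ x ∈ P, ⟪x, u⟫ = b) ∧ F = {x ∈ P | ⟪x, u⟫ = b} ∧ F ≠ P

/-- `F` is a face of `P` (cut out by a supporting hyperplane). -/
def IsFaceOf (P F : Set (Euc n)) : Prop := IsFaceIn ⊤ P F

/-- The polar of `K` computed inside the subspace `V`. -/
def polarIn (V : Submodule ℝ (Euc n)) (K : Set (Euc n)) : Set (Euc n) :=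
  {y | y ∈ V ∧ ∀ x ∈ K, ⟪x, y⟫ ≤ 1}

/-- The dual face of a face `F` of `P`, computed inside the subspace `V`. -/
def dualFaceIn (V : Submodule ℝ (Euc n)) (P F : Set (Euc n)) : Set (Euc n) :=
  {y ∈ polarIn V P | ∀ x ∈ F, ⟪x, y⟫ = 1}

/-- The dual face `F* = {y ∈ P° : ⟨x,y⟩ = 1 ∀ x ∈ F}`. -/
def dualFace (P F : Set (Euc n)) : Set (Euc n) := dualFaceIn ⊤ P F

/-- A convex polytope: convex hull of finitely many points. -/
def IsPolytope (P : Set (Euc n)) : Prop := ∃ S : Finset (Euc n), P = convexHull ℝ (S : Set (Euc n))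

/-- A flag over `P`: an increasing chain of faces `F⁰ ⊂ F¹ ⊂ ⋯ ⊂ F^{n-1}` with `dim F^k = k`. -/
def IsFlagOf (P : Set (Euc n)) (𝔽 : Fin n → Set (Euc n)) : Prop :=
  (∀ k, IsFaceOf P (𝔽 k)) ∧ (∀ k : Fin n, setDim (𝔽 k) = (k : ℕ)) ∧
  (∀ k l : Fin n, k ≤ l → 𝔽 k ⊆ 𝔽 l)

/-- The volume of the simplex `Z_𝔽 = conv{0, z_{F⁰}, …, z_{F^{n-1}}}`. -/
def flagVol (Z : Set (Euc n) → Euc n) (𝔽 : Fin n → Set (Euc n)) : ℝ :=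
  vol (convexHull ℝ (insert (0 : Euc n) (Set.range fun k => Z (𝔽 k))))

/-- The volume function `V(Z) = Σ_𝔽 |Z_𝔽|`, sum over all flags of `P`. -/
def Vfun (P : Set (Euc n)) (Z : Set (Euc n) → Euc n) : ℝ :=
  ∑ᶠ (𝔽 : Fin n → Set (Euc n)) (_ : IsFlagOf P 𝔽), flagVol Z 𝔽

/-- The partial volume function: sum over all flags of `P` containing the face `G`. -/
def VfunG (P G : Set (Euc n)) (Z : Set (Euc n) → Euc n) : ℝ :=
  ∑ᶠ (𝔽 : Fin n → Set (Euc n)) (_ : IsFlagOf P 𝔽 ∧ G ∈ Set.range 𝔽), flagVol Z 𝔽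

/-- `x_F` is the point of `(t_F • A_F) ∩ ∂K` nearest to `c_F`, where `t_F • A_F` is
tangent to `K`. -/
def TangentXPoint (K AF : Set (Euc n)) (cF : Euc n) (tF : ℝ) (xF : Euc n) : Prop :=
  0 < tF ∧ (tF • AF) ∩ interior K = ∅ ∧ xF ∈ (tF • AF) ∩ frontier K ∧
  ∀ z ∈ (tF • AF) ∩ frontier K, dist cF xF ≤ dist cF z

/-- The pair of points `x_F, y_F` constructed from `K`, `A_F`, `c_F`. -/
def TangentPointAt (K AF : Set (Euc n)) (cF : Euc n) (tF : ℝ) (xF yF : Euc n) : Prop :=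
  TangentXPoint K AF cF tF xF ∧ yF = tF • cF

/-- Conditions (a) and (b) for the affine subspace `A F` at a face `F` of `body`. -/
def GoodAt (body : Set (Euc n)) (A : Set (Euc n) → Set (Euc n)) (c : Set (Euc n) → Euc n)
    (F : Set (Euc n)) : Prop :=
  (∃ S : AffineSubspace ℝ (Euc n), A F = (S : Set (Euc n))) ∧
  A F ∩ body = {c F} ∧ c F ∈ intrinsicInterior ℝ F ∧
  setDim (A F) + setDim F + 1 = n

/-- Conditions (a), (b), (c) for the family of affine subspaces `A_F` attached to the faces
of `P` and of `P°`. -/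
def GoodFamily (P : Set (Euc n)) (A : Set (Euc n) → Set (Euc n)) (c : Set (Euc n) → Euc n) : Prop :=
  (∀ F, IsFaceOf P F → GoodAt P A c F ∧
      ∀ x ∈ A F, ∀ y ∈ A (dualFace P F), ⟪x, y⟫ = 1) ∧
  (∀ G, IsFaceOf (polarSet P) G → GoodAt (polarSet P) A c G)

/-- Hanner polytopes: symmetric segments, closed under ℓ1 and ℓ∞ sums of
linearly independent summands. -/
inductive IsHanner : Set (Euc n) → Prop
  | seg (x : Euc n) (hx : x ≠ 0) : IsHanner (segment ℝ (-x) x)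
  | l1 {A B : Set (Euc n)} (hA : IsHanner A) (hB : IsHanner B)
      (hspan : Submodule.span ℝ A ⊓ Submodule.span ℝ B = ⊥) :
      IsHanner (convexHull ℝ (A ∪ B))
  | linf {A B : Set (Euc n)} (hA : IsHanner A) (hB : IsHanner B)
      (hspan : Submodule.span ℝ A ⊓ Submodule.span ℝ B = ⊥) :
      IsHanner (A + B)

/-- The rules of Definition 4.1 defining `A` on the faces of the ℓ1-sum `H₁ ⊕₁ H₂` from the
families `A₁, A₂` for `H₁, H₂`. -/
def L1Rules (H₁ H₂ : Set (Euc n)) (A₁ A₂ A : Set (Euc n) → Set (Euc n)) : Prop :=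
  (∀ F₁, IsFaceIn (Submodule.span ℝ H₁) H₁ F₁ →
      A F₁ = A₁ F₁ + (Submodule.span ℝ H₂ : Set (Euc n))) ∧
  (∀ F₂, IsFaceIn (Submodule.span ℝ H₂) H₂ F₂ →
      A F₂ = (Submodule.span ℝ H₁ : Set (Euc n)) + A₂ F₂) ∧
  (∀ F₁ F₂, IsFaceIn (Submodule.span ℝ H₁) H₁ F₁ → IsFaceIn (Submodule.span ℝ H₂) H₂ F₂ →
      A (convexHull ℝ (F₁ ∪ F₂)) =
        ((setDim F₁ + 1 : ℝ) / (setDim F₁ + setDim F₂ + 2)) • A₁ F₁ +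
        ((setDim F₂ + 1 : ℝ) / (setDim F₁ + setDim F₂ + 2)) • A₂ F₂)

/-- The rules of Definition 4.1 defining `A` on the faces of the ℓ∞-sum `H₁ ⊕∞ H₂` from the
families `A₁, A₂` for `H₁, H₂`. -/
def LInfRules (H₁ H₂ : Set (Euc n)) (A₁ A₂ A : Set (Euc n) → Set (Euc n)) : Prop :=
  (∀ F₁, IsFaceIn (Submodule.span ℝ H₁) H₁ F₁ → A (F₁ + H₂) = A₁ F₁) ∧
  (∀ F₂, IsFaceIn (Submodule.span ℝ H₂) H₂ F₂ → A (H₁ + F₂) = A₂ F₂) ∧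
  (∀ F₁ F₂, IsFaceIn (Submodule.span ℝ H₁) H₁ F₁ → IsFaceIn (Submodule.span ℝ H₂) H₂ F₂ →
      A (F₁ + F₂) = A₁ F₁ + A₂ F₂ +
        (Submodule.span ℝ
          {(((setDim H₁ : ℝ) - setDim F₁)⁻¹ • centroid F₁ -
            ((setDim H₂ : ℝ) - setDim F₂)⁻¹ • centroid F₂)} : Set (Euc n)))

/-- A Hanner polytope `H` together with its recursively defined family `A` of affine
subspaces, paired with the (relative) polar Hanner polytope `H'` and its family `A'`. -/
inductive HannerRep :
    Set (Euc n) → (Set (Euc n) → Set (Euc n)) → Set (Euc n) → (Set (Euc n) → Set (Euc n)) → Prop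
  | seg (x : Euc n) (hx : x ≠ 0) (A A' : Set (Euc n) → Set (Euc n))
      (hA1 : A {x} = {x}) (hA2 : A {-x} = {-x})
      (hA'1 : A' {(‖x‖ ^ 2)⁻¹ • x} = {(‖x‖ ^ 2)⁻¹ • x})
      (hA'2 : A' {-((‖x‖ ^ 2)⁻¹ • x)} = {-((‖x‖ ^ 2)⁻¹ • x)}) :
      HannerRep (segment ℝ (-x) x) A
        (segment ℝ (-((‖x‖ ^ 2)⁻¹ • x)) ((‖x‖ ^ 2)⁻¹ • x)) A'
  | l1 {H₁ H₂ H₁' H₂' : Set (Euc n)} {A₁ A₂ A₁' A₂' A A' : Set (Euc n) → Set (Euc n)}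
      (h₁ : HannerRep H₁ A₁ H₁' A₁') (h₂ : HannerRep H₂ A₂ H₂' A₂')
      (horth : Submodule.span ℝ (H₂ ∪ H₂') ≤ (Submodule.span ℝ (H₁ ∪ H₁'))ᗮ)
      (hA : L1Rules H₁ H₂ A₁ A₂ A) (hA' : LInfRules H₁' H₂' A₁' A₂' A') :
      HannerRep (convexHull ℝ (H₁ ∪ H₂)) A (H₁' + H₂') A'
  | linf {H₁ H₂ H₁' H₂' : Set (Euc n)} {A₁ A₂ A₁' A₂' A A' : Set (Euc n) → Set (Euc n)}
      (h₁ : HannerRep H₁ A₁ H₁' A₁') (h₂ : HannerRep H₂ A₂ H₂' A₂')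
      (horth : Submodule.span ℝ (H₂ ∪ H₂') ≤ (Submodule.span ℝ (H₁ ∪ H₁'))ᗮ)
      (hA : LInfRules H₁ H₂ A₁ A₂ A) (hA' : L1Rules H₁' H₂' A₁' A₂' A') :
      HannerRep (H₁ + H₂) A (convexHull ℝ (H₁' ∪ H₂')) A'

/-- The standard symmetric segment `[-e_j, e_j]`. -/
def stdSeg (j : Fin n) : Set (Euc n) :=
  segment ℝ (-(EuclideanSpace.single j (1 : ℝ))) (EuclideanSpace.single j (1 : ℝ))

/-- A standard Hanner polytope `H` (built from the segments `[-e_j, e_j]`) together with its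
recursively defined family `A` of affine subspaces, paired with the polar standard Hanner
polytope `H'` and its family `A'`. -/
inductive StdHannerRep :
    Set (Euc n) → (Set (Euc n) → Set (Euc n)) → Set (Euc n) → (Set (Euc n) → Set (Euc n)) → Prop
  | seg (j : Fin n) (A A' : Set (Euc n) → Set (Euc n))
      (hA1 : A {EuclideanSpace.single j (1 : ℝ)} = {EuclideanSpace.single j (1 : ℝ)})
      (hA2 : A {-EuclideanSpace.single j (1 : ℝ)} = {-EuclideanSpace.single j (1 : ℝ)})
      (hA'1 : A' {EuclideanSpace.single j (1 : ℝ)} = {EuclideanSpace.single j (1 : ℝ)})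
      (hA'2 : A' {-EuclideanSpace.single j (1 : ℝ)} = {-EuclideanSpace.single j (1 : ℝ)}) :
      StdHannerRep (stdSeg j) A (stdSeg j) A'
  | l1 {H₁ H₂ H₁' H₂' : Set (Euc n)} {A₁ A₂ A₁' A₂' A A' : Set (Euc n) → Set (Euc n)}
      (h₁ : StdHannerRep H₁ A₁ H₁' A₁') (h₂ : StdHannerRep H₂ A₂ H₂' A₂')
      (hspan : Submodule.span ℝ (H₁ ∪ H₁') ⊓ Submodule.span ℝ (H₂ ∪ H₂') = ⊥)
      (hA : L1Rules H₁ H₂ A₁ A₂ A) (hA' : LInfRules H₁' H₂' A₁' A₂' A') :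
      StdHannerRep (convexHull ℝ (H₁ ∪ H₂)) A (H₁' + H₂') A'
  | linf {H₁ H₂ H₁' H₂' : Set (Euc n)} {A₁ A₂ A₁' A₂' A A' : Set (Euc n) → Set (Euc n)}
      (h₁ : StdHannerRep H₁ A₁ H₁' A₁') (h₂ : StdHannerRep H₂ A₂ H₂' A₂')
      (hspan : Submodule.span ℝ (H₁ ∪ H₁') ⊓ Submodule.span ℝ (H₂ ∪ H₂') = ⊥)
      (hA : LInfRules H₁ H₂ A₁ A₂ A) (hA' : L1Rules H₁' H₂' A₁' A₂' A') :
      StdHannerRep (H₁ + H₂) A (convexHull ℝ (H₁' ∪ H₂')) A'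

/-- `H` is a standard Hanner polytope. -/
def IsStdHanner (H : Set (Euc n)) : Prop :=
  ∃ (A : Set (Euc n) → Set (Euc n)) (H' : Set (Euc n)) (A' : Set (Euc n) → Set (Euc n)),
    StdHannerRep H A H' A'

/-- The unit cube `B∞ⁿ = [-1,1]ⁿ`. -/
def cube (n : ℕ) : Set (Euc n) := {x | ∀ i, |x i| ≤ 1}

/-- The unit cross-polytope `B₁ⁿ`. -/
def crossPolytope (n : ℕ) : Set (Euc n) := {x | ∑ i, |x i| ≤ 1}

/-- The coordinate subspace `ℝ^(v) = span{e_j : j ∈ supp v}`. -/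
def suppSpan (v : Euc n) : Submodule ℝ (Euc n) :=
  Submodule.span ℝ {x : Euc n | ∃ j, v j ≠ 0 ∧ x = EuclideanSpace.single j (1 : ℝ)}

/-- Orthogonal projection of a set onto a subspace. -/
def projSet (V : Submodule ℝ (Euc n)) (K : Set (Euc n)) : Set (Euc n) :=
  (fun x => (orthogonalProjection V x : Euc n)) '' K

end
section Aux
variable {n : ℕ}

lemma le_infDist'' {s : Set (Euc n)} {x : Euc n} {b : ℝ} (hs : s.Nonempty)
    (h : ∀ y ∈ s, b ≤ dist x y) : b ≤ Metric.infDist x s := by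
  refine le_of_not_gt fun hlt => ?_
  obtain ⟨y, hy, hd⟩ := (Metric.infDist_lt_iff hs).1 hlt
  exact absurd hd (not_lt.2 (h y hy))

lemma convex_polarSet (K : Set (Euc n)) : Convex ℝ (polarSet K) := by
  intro y hy z hz a b ha hb hab
  intro x hx
  have h1 := hy x hx
  have h2 := hz x hx
  have : ⟪x, a • y + b • z⟫ = a * ⟪x, y⟫ + b * ⟪x, z⟫ := by
    rw [inner_add_right, real_inner_smul_right, real_inner_smul_right]
  rw [this]
  nlinarith

lemma isClosed_polarSet (K : Set (Euc n)) : IsClosed (polarSet K) := by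
  have : polarSet K = ⋂ x ∈ K, {y : Euc n | ⟪x, y⟫ ≤ 1} := by
    ext y; simp [polarSet, Set.mem_iInter]
  rw [this]
  exact isClosed_biInter fun x _ =>
    isClosed_le (Continuous.inner continuous_const continuous_id) continuous_const

lemma zero_mem_polarSet (K : Set (Euc n)) : (0 : Euc n) ∈ polarSet K := by
  intro x hx; simp

lemma zero_mem_interior_polarSet {K : Set (Euc n)} (hb : Bornology.IsBounded K) :
    (0 : Euc n) ∈ interior (polarSet K) := by
  obtain ⟨R, hR⟩ := hb.subset_closedBall 0
  set R' : ℝ := max R 1 with hR'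
  have hR'0 : 0 < R' := lt_of_lt_of_le one_pos (le_max_right _ _)
  have hsub : Metric.ball (0 : Euc n) R'⁻¹ ⊆ polarSet K := by
    intro y hy x hx
    have hxR : ‖x‖ ≤ R' := by
      have := hR hx
      simp only [Metric.mem_closedBall, dist_zero_right] at this
      exact le_trans this (le_max_left _ _)
    have hyR : ‖y‖ < R'⁻¹ := by
      simpa [Metric.mem_ball, dist_zero_right] using hy
    have h1 : ⟪x, y⟫ ≤ ‖x‖ * ‖y‖ := real_inner_le_norm x y
    have h2 : ‖x‖ * ‖y‖ < 1 := by
      have := mul_inv_cancel₀ (ne_of_gt hR'0)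
      nlinarith [norm_nonneg y, norm_nonneg x]
    linarith
  exact mem_interior.2 ⟨_, hsub, Metric.isOpen_ball, by simpa using inv_pos.2 hR'0⟩

end Aux
section Aux2
variable {n : ℕ}

lemma sep_affine_of_disjoint_interior {Aset K : Set (Euc n)}
    (hline : ∀ z ∈ Aset, ∀ z' ∈ Aset, ∀ t : ℝ, z + t • (z' - z) ∈ Aset)
    (hconv : Convex ℝ Aset) (hne : Aset.Nonempty)
    (hK : Convex ℝ K) (h0 : (0 : Euc n) ∈ interior K)
    (hdisj : Aset ∩ interior K = ∅) :
    ∃ w : Euc n, (∀ k ∈ K, ⟪k, w⟫ ≤ 1) ∧ ∀ z ∈ Aset, ⟪z, w⟫ = 1 := by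
  have hdisj' : Disjoint (interior K) Aset := by
    rw [Set.disjoint_iff_inter_eq_empty, Set.inter_comm]; exact hdisj
  obtain ⟨f, u, hfu, hub⟩ :=
    geometric_hahn_banach_open (hK.interior) isOpen_interior hconv hdisj'
  have hu0 : 0 < u := by simpa using hfu 0 h0
  have hconst : ∀ z ∈ Aset, ∀ z' ∈ Aset, f z' = f z := by
    intro z hz z' hz'
    by_contra hd
    have hd' : f z' - f z ≠ 0 := sub_ne_zero.2 hd
    set t : ℝ := (u - 1 - f z) / (f z' - f z) with ht
    have hp := hline z hz z' hz' t
    have hfp : f (z + t • (z' - z)) = f z + t * (f z' - f z) := by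
      rw [map_add, _root_.map_smul, map_sub, smul_eq_mul]
    have := hub _ hp
    rw [hfp, ht, div_mul_cancel₀ _ hd'] at this
    linarith
  obtain ⟨z₀, hz₀⟩ := hne
  set v : ℝ := f z₀ with hv
  have huv : u ≤ v := hub z₀ hz₀
  have hv0 : 0 < v := lt_of_lt_of_le hu0 huv
  set w₀ : Euc n := (InnerProductSpace.toDual ℝ (Euc n)).symm f with hw₀
  have hw₀p : ∀ x : Euc n, ⟪w₀, x⟫ = f x := fun x =>
    InnerProductSpace.toDual_symm_apply
  refine ⟨v⁻¹ • w₀, ?_, ?_⟩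
  · intro k hk
    have hfk : f k ≤ u := by
      by_contra hgt
      push_neg at hgt
      set t : ℝ := (1 - u / f k) / 2 with htdef
      have hfk0 : 0 < f k := lt_trans hu0 hgt
      have ht0 : 0 < t := by
        have : u / f k < 1 := (div_lt_one hfk0).2 hgt
        rw [htdef]; linarith
      have ht1 : t + (1 - t) = 1 := by ring
      have ht1' : (0:ℝ) ≤ 1 - t := by
        have : 0 < u / f k := div_pos hu0 hfk0
        rw [htdef]; linarith
      have hmem := hK.combo_interior_self_mem_interior h0 hk ht0 ht1' ht1
      have hval : f (t • (0:Euc n) + (1 - t) • k) = (1 - t) * f k := by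
        rw [smul_zero, zero_add, _root_.map_smul, smul_eq_mul]
      have hlt : (1 - t) * f k < u := by rw [← hval]; exact hfu _ hmem
      have : u < (1 - t) * f k := by
        have h1 : t * f k < f k - u := by
          have : t < 1 - u / f k := by rw [htdef]; linarith
          calc t * f k < (1 - u / f k) * f k := by nlinarith
            _ = f k - u := by field_simp
        nlinarith
      linarith
    have : ⟪k, v⁻¹ • w₀⟫ = v⁻¹ * f k := by
      rw [real_inner_smul_right, real_inner_comm, hw₀p]
    rw [this]
    calc v⁻¹ * f k ≤ v⁻¹ * v := by
          have := inv_pos.2 hv0; nlinarith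
      _ = 1 := inv_mul_cancel₀ (ne_of_gt hv0)
  · intro z hz
    have : ⟪z, v⁻¹ • w₀⟫ = v⁻¹ * f z := by
      rw [real_inner_smul_right, real_inner_comm, hw₀p]
    rw [this, hconst z₀ hz₀ z hz, ← hv, inv_mul_cancel₀ (ne_of_gt hv0)]

lemma exists_forward_of_intrinsicInterior {F : Set (Euc n)} {cc x : Euc n}
    (hc : cc ∈ intrinsicInterior ℝ F) (hx : x ∈ F) :
    ∃ t : ℝ, 0 < t ∧ t • (cc - x) + cc ∈ F := by
  have hcF : cc ∈ F := intrinsicInterior_subset hc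
  have hcS : cc ∈ affineSpan ℝ F := subset_affineSpan ℝ F hcF
  have hxS : x ∈ affineSpan ℝ F := subset_affineSpan ℝ F hx
  have hmem : ∀ t : ℝ, t • (cc - x) + cc ∈ affineSpan ℝ F := by
    intro t
    have := AffineSubspace.smul_vsub_vadd_mem (affineSpan ℝ F) t hcS hxS hcS
    simpa [vsub_eq_sub, vadd_eq_add] using this
  obtain ⟨c₀, hc₀, hcoe⟩ := hc
  set γ : ℝ → (affineSpan ℝ F : Set (Euc n)) := fun t => ⟨t • (cc - x) + cc, hmem t⟩ with hγdef
  have hγc : Continuous γ := by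
    apply Continuous.subtype_mk
    exact (continuous_id.smul continuous_const).add continuous_const
  have hO : IsOpen (γ ⁻¹' interior ((Subtype.val) ⁻¹' F)) :=
    isOpen_interior.preimage hγc
  have h0mem : (0 : ℝ) ∈ γ ⁻¹' interior ((Subtype.val) ⁻¹' F) := by
    have hγ0 : γ 0 = c₀ := by
      apply Subtype.ext
      simp [hγdef, hcoe]
    rw [Set.mem_preimage, hγ0]
    exact hc₀
  obtain ⟨ε, hε, hball⟩ := Metric.isOpen_iff.1 hO 0 h0mem
  refine ⟨ε / 2, by linarith, ?_⟩
  have : (ε / 2 : ℝ) ∈ Metric.ball (0:ℝ) ε := by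
    simp only [Metric.mem_ball, Real.dist_eq, sub_zero]
    rw [abs_of_pos (by linarith : (0:ℝ) < ε / 2)]; linarith
  have := interior_subset (hball this)
  exact this

lemma face_b_pos {P : Set (Euc n)} (h0P : (0 : Euc n) ∈ interior P) {u : Euc n} {b : ℝ}
    (hu : u ≠ 0) (hsup : ∀ x ∈ P, ⟪x, u⟫ ≤ b) : 0 < b := by
  obtain ⟨ε, hε, hball⟩ := Metric.isOpen_iff.1 isOpen_interior 0 h0P
  have hu0 : 0 < ‖u‖ := norm_pos_iff.2 hu
  set x : Euc n := (ε / 2) • (‖u‖⁻¹ • u) with hx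
  have hnormx : ‖x‖ = ε / 2 := by
    rw [hx, norm_smul, norm_smul, norm_inv, norm_norm, Real.norm_eq_abs,
      abs_of_pos (by linarith : (0:ℝ) < ε / 2), inv_mul_cancel₀ (ne_of_gt hu0), mul_one]
  have hxP : x ∈ P := by
    apply interior_subset (hball _)
    simp only [Metric.mem_ball, dist_zero_right, hnormx]
    linarith
  have hxu : ⟪x, u⟫ = (ε / 2) * ‖u‖ := by
    rw [hx, real_inner_smul_left, real_inner_smul_left, real_inner_self_eq_norm_sq]
    field_simp
  have := hsup x hxP
  rw [hxu] at this
  nlinarith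

lemma polarIn_top (P : Set (Euc n)) : polarIn ⊤ P = polarSet P := by
  ext y; simp [polarIn, polarSet]

lemma dualFace_eq (P F : Set (Euc n)) :
    dualFace P F = {y ∈ polarSet P | ∀ x ∈ F, ⟪x, y⟫ = 1} := by
  rw [dualFace, dualFaceIn, polarIn_top]

lemma isFaceOf_dualFace {P F : Set (Euc n)} (h0P : (0 : Euc n) ∈ interior P)
    (hF : IsFaceOf P F) {cF : Euc n} (hcF : cF ∈ intrinsicInterior ℝ F) :
    IsFaceOf (polarSet P) (dualFace P F) := by
  obtain ⟨u, b, -, hu0, hsup, ⟨x₀, hx₀P, hx₀b⟩, hFeq, hFne⟩ := hF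
  have hb : 0 < b := face_b_pos h0P hu0 hsup
  have hcFF : cF ∈ F := intrinsicInterior_subset hcF
  have hcFP : cF ∈ P := by rw [hFeq] at hcFF; exact hcFF.1
  have hcFb : ⟪cF, u⟫ = b := by rw [hFeq] at hcFF; exact hcFF.2
  have hFsubP : F ⊆ P := by rw [hFeq]; exact fun z hz => hz.1
  have hcF0 : cF ≠ 0 := by
    intro h; rw [h] at hcFb; simp at hcFb; rw [← hcFb] at hb; exact lt_irrefl 0 hb
  have key : dualFace P F = {y ∈ polarSet P | ⟪y, cF⟫ = 1} := by
    rw [dualFace_eq]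
    ext y
    constructor
    · rintro ⟨hyP, hy1⟩
      exact ⟨hyP, by rw [real_inner_comm]; exact hy1 cF hcFF⟩
    · rintro ⟨hyP, hy1⟩
      refine ⟨hyP, fun x hx => ?_⟩
      obtain ⟨t, ht, htF⟩ := exists_forward_of_intrinsicInterior hcF hx
      have hp : t • (cF - x) + cF ∈ P := hFsubP htF
      have h1 : ⟪t • (cF - x) + cF, y⟫ ≤ 1 := hyP _ hp
      have h2 : ⟪x, y⟫ ≤ 1 := hyP x (hFsubP hx)
      have h3 : ⟪cF, y⟫ = 1 := by rw [real_inner_comm]; exact hy1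
      have hexp : ⟪t • (cF - x) + cF, y⟫ = t * (1 - ⟪x, y⟫) + 1 := by
        rw [inner_add_left, real_inner_smul_left, inner_sub_left, h3]
      rw [hexp] at h1
      nlinarith
  refine ⟨cF, 1, Submodule.mem_top, hcF0, ?_, ?_, ?_, ?_⟩
  · intro y hy; rw [real_inner_comm]; exact hy cF hcFP
  · refine ⟨b⁻¹ • u, ?_, ?_⟩
    · intro p hp
      rw [real_inner_smul_right]
      calc b⁻¹ * ⟪p, u⟫ ≤ b⁻¹ * b := by
            have := inv_pos.2 hb; nlinarith [hsup p hp]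
        _ = 1 := inv_mul_cancel₀ (ne_of_gt hb)
    · rw [real_inner_smul_left, real_inner_comm, hcFb, inv_mul_cancel₀ (ne_of_gt hb)]
  · exact key
  · intro h
    have h0m : (0 : Euc n) ∈ dualFace P F := by rw [h]; exact zero_mem_polarSet P
    rw [dualFace_eq] at h0m
    have := h0m.2 cF hcFF
    simp at this

end Aux2
section Aux3
variable {n : ℕ}

lemma set_sub_eq_vsub (s : Set (Euc n)) : s - s = s -ᵥ s := rfl

lemma setDim_coe_affine (S : AffineSubspace ℝ (Euc n)) :
    setDim (S : Set (Euc n)) = Module.finrank ℝ S.direction := rfl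

lemma finrank_euc : Module.finrank ℝ (Euc n) = n := by
  simp [finrank_euclideanSpace]

lemma span_sub_le_orthogonal {s yset : Set (Euc n)}
    (h : ∀ x ∈ s, ∀ y ∈ yset, ⟪x, y⟫ = 1) :
    Submodule.span ℝ (yset - yset) ≤ (Submodule.span ℝ s)ᗮ := by
  rw [Submodule.span_le]
  rintro v ⟨y, hy, y', hy', rfl⟩
  rw [SetLike.mem_coe, Submodule.mem_orthogonal]
  intro x hx
  induction hx using Submodule.span_induction with
  | mem z hz => rw [inner_sub_right, h z hz y hy, h z hz y' hy']; ring
  | zero => simp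
  | add a b _ _ ha hb => rw [inner_add_left, ha, hb]; ring
  | smul t a _ ha => rw [real_inner_smul_left, ha]; ring

lemma mem_orthogonal_span_of_inner_eq {s : Set (Euc n)} {v : Euc n}
    (h : ∀ x ∈ s, ⟪x, v⟫ = 0) : v ∈ (Submodule.span ℝ s)ᗮ := by
  rw [Submodule.mem_orthogonal]
  intro x hx
  induction hx using Submodule.span_induction with
  | mem z hz => exact h z hz
  | zero => simp
  | add a b _ _ ha hb => rw [inner_add_left, ha, hb]; ring
  | smul t a _ ha => rw [real_inner_smul_left, ha]; ring

lemma setDim_add_one_le_finrank_span {F : Set (Euc n)} {u cF : Euc n} {b : ℝ}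
    (hb : b ≠ 0) (hmemF : ∀ x ∈ F, ⟪x, u⟫ = b) (hcF : cF ∈ F) :
    setDim F + 1 ≤ Module.finrank ℝ (Submodule.span ℝ F) := by
  set W : Submodule ℝ (Euc n) := Submodule.span ℝ (F - F) with hW
  have hWu : ∀ w ∈ W, ⟪w, u⟫ = 0 := by
    intro w hw
    induction hw using Submodule.span_induction with
    | mem z hz =>
        obtain ⟨x, hx, y, hy, rfl⟩ := hz
        rw [inner_sub_left, hmemF x hx, hmemF y hy]; ring
    | zero => simp
    | add a b _ _ ha hb => rw [inner_add_left, ha, hb]; ring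
    | smul t a _ ha => rw [real_inner_smul_left, ha]; ring
  have hcu : ⟪cF, u⟫ = b := hmemF cF hcF
  have hc0 : cF ≠ 0 := by intro h; rw [h] at hcu; simp at hcu; exact hb hcu.symm
  have hWle : W ≤ Submodule.span ℝ F := by
    rw [hW, Submodule.span_le]
    rintro v ⟨x, hx, y, hy, rfl⟩
    exact sub_mem (Submodule.subset_span hx) (Submodule.subset_span hy)
  have hcle : Submodule.span ℝ {cF} ≤ Submodule.span ℝ F :=
    Submodule.span_mono (Set.singleton_subset_iff.2 hcF)
  have hinf : W ⊓ Submodule.span ℝ {cF} = ⊥ := by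
    rw [Submodule.eq_bot_iff]
    rintro v ⟨hvW, hvc⟩
    obtain ⟨t, rfl⟩ := Submodule.mem_span_singleton.1 hvc
    have := hWu _ hvW
    rw [real_inner_smul_left, hcu] at this
    have ht : t = 0 := by
      rcases mul_eq_zero.1 this with h | h
      · exact h
      · exact absurd h hb
    rw [ht, zero_smul]
  have hsup : W ⊔ Submodule.span ℝ {cF} ≤ Submodule.span ℝ F := sup_le hWle hcle
  have h1 : Module.finrank ℝ (W ⊔ Submodule.span ℝ {cF} : Submodule ℝ (Euc n)) =
      Module.finrank ℝ W + 1 := by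
    have := Submodule.finrank_sup_add_finrank_inf_eq W (Submodule.span ℝ {cF})
    rw [hinf, finrank_span_singleton hc0] at this
    simpa using this
  have h2 := Submodule.finrank_mono hsup
  rw [h1] at h2
  exact h2

lemma setDim_dualFace_le {P F : Set (Euc n)} (h0P : (0 : Euc n) ∈ interior P)
    (hF : IsFaceOf P F) : setDim (dualFace P F) + setDim F + 1 ≤ n := by
  obtain ⟨u, b, -, hu0, hsup, ⟨x₀, hx₀P, hx₀b⟩, hFeq, hFne⟩ := hF
  have hb : 0 < b := face_b_pos h0P hu0 hsup
  have hmemF : ∀ x ∈ F, ⟪x, u⟫ = b := by intro x hx; rw [hFeq] at hx; exact hx.2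
  have hx₀F : x₀ ∈ F := by rw [hFeq]; exact ⟨hx₀P, hx₀b⟩
  have hd1 := setDim_add_one_le_finrank_span (ne_of_gt hb) hmemF hx₀F
  have hdual : ∀ x ∈ F, ∀ y ∈ dualFace P F, ⟪x, y⟫ = 1 := by
    intro x hx y hy
    rw [dualFace_eq] at hy
    exact hy.2 x hx
  have hle := span_sub_le_orthogonal hdual
  have hd2 : setDim (dualFace P F) ≤
      Module.finrank ℝ ((Submodule.span ℝ F)ᗮ : Submodule ℝ (Euc n)) :=
    Submodule.finrank_mono hle
  have hd3 := Submodule.finrank_add_finrank_orthogonal (Submodule.span ℝ F : Submodule ℝ (Euc n))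
  rw [finrank_euc] at hd3
  omega

lemma finrank_span_affine {S : AffineSubspace ℝ (Euc n)} {c : Euc n} (hc : c ∈ S)
    (h0 : (0 : Euc n) ∉ (S : Set (Euc n))) :
    Module.finrank ℝ (Submodule.span ℝ (S : Set (Euc n))) =
      Module.finrank ℝ S.direction + 1 := by
  have hc0 : c ≠ 0 := by intro h; rw [h] at hc; exact h0 hc
  have hcd : c ∉ S.direction := by
    intro h
    have h2 := AffineSubspace.vadd_mem_of_mem_direction (neg_mem h) hc
    have h3 : (0 : Euc n) ∈ (S : Set (Euc n)) := by
      simpa [vadd_eq_add] using h2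
    exact h0 h3
  have hspan_eq : Submodule.span ℝ (S : Set (Euc n)) = S.direction ⊔ Submodule.span ℝ {c} := by
    apply le_antisymm
    · rw [Submodule.span_le]
      intro x hx
      have hxd : x - c ∈ S.direction := by
        have := AffineSubspace.vsub_mem_direction hx hc
        simpa [vsub_eq_sub] using this
      have hxe : x = (x - c) + c := by abel
      rw [SetLike.mem_coe, hxe]
      exact add_mem (Submodule.mem_sup_left hxd)
        (Submodule.mem_sup_right (Submodule.mem_span_singleton_self c))
    · apply sup_le
      · intro v hv
        rw [AffineSubspace.mem_direction_iff_eq_vsub ⟨c, hc⟩] at hv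
        obtain ⟨p, hp, q, hq, rfl⟩ := hv
        rw [vsub_eq_sub]
        exact sub_mem (Submodule.subset_span hp) (Submodule.subset_span hq)
      · rw [Submodule.span_le, Set.singleton_subset_iff]
        exact Submodule.subset_span hc
  have hinf : S.direction ⊓ Submodule.span ℝ {c} = ⊥ := by
    rw [Submodule.eq_bot_iff]
    rintro v ⟨hvW, hvc⟩
    obtain ⟨t, rfl⟩ := Submodule.mem_span_singleton.1 hvc
    rcases eq_or_ne t 0 with h | h
    · rw [h, zero_smul]
    · exfalso
      have h3 := Submodule.smul_mem S.direction t⁻¹ hvW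
      rw [smul_smul, inv_mul_cancel₀ h, one_smul] at h3
      exact hcd h3
  rw [hspan_eq]
  have := Submodule.finrank_sup_add_finrank_inf_eq S.direction (Submodule.span ℝ {c})
  rw [hinf, finrank_span_singleton hc0] at this
  simpa using this

lemma dual_affine_complete {AF AFd : Set (Euc n)} {SA SAd : AffineSubspace ℝ (Euc n)}
    (hSA : AF = (SA : Set (Euc n))) (hSAd : AFd = (SAd : Set (Euc n)))
    {cd : Euc n} (hcd : cd ∈ AFd)
    (hcond : ∀ x ∈ AF, ∀ y ∈ AFd, ⟪x, y⟫ = 1)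
    {cA : Euc n} (hcA : cA ∈ AF)
    (hrank : n ≤ setDim AF + 1 + setDim AFd)
    {w' : Euc n} (hw' : ∀ a ∈ AF, ⟪a, w'⟫ = 1) : w' ∈ AFd := by
  have h0AF : (0 : Euc n) ∉ AF := by
    intro h
    have := hcond 0 h cd hcd
    simp at this
  have hcAS : cA ∈ SA := by rw [hSA] at hcA; exact hcA
  have hfr : Module.finrank ℝ (Submodule.span ℝ AF) = setDim AF + 1 := by
    rw [hSA, finrank_span_affine hcAS (by rw [← hSA]; exact h0AF),
      ← setDim_coe_affine, ← hSA]
  have hdir_le : SAd.direction ≤ (Submodule.span ℝ AF)ᗮ := by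
    have h1 : SAd.direction = Submodule.span ℝ (AFd - AFd) := by
      rw [hSAd, set_sub_eq_vsub]; rfl
    rw [h1]
    exact span_sub_le_orthogonal hcond
  have hfrd : Module.finrank ℝ SAd.direction = setDim AFd := by
    rw [← setDim_coe_affine, ← hSAd]
  have hfro := Submodule.finrank_add_finrank_orthogonal (Submodule.span ℝ AF : Submodule ℝ (Euc n))
  rw [finrank_euc, hfr] at hfro
  have heq : SAd.direction = (Submodule.span ℝ AF)ᗮ := by
    apply Submodule.eq_of_le_of_finrank_le hdir_le
    rw [hfrd]; omega
  have hw'mem : w' - cd ∈ (Submodule.span ℝ AF)ᗮ := by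
    apply mem_orthogonal_span_of_inner_eq
    intro x hx
    rw [inner_sub_right, hw' x hx, hcond x hx cd hcd]; ring
  rw [← heq] at hw'mem
  have hcdS : cd ∈ SAd := by rw [hSAd] at hcd; exact hcd
  have := AffineSubspace.vadd_mem_of_mem_direction hw'mem hcdS
  rw [hSAd]
  simpa [vadd_eq_add, sub_add_cancel] using this

end Aux3
section Aux4
variable {n : ℕ}

def coneSet (G : Finset (Euc n)) : Set (Euc n) :=
  {x | ∃ ν : Euc n → ℝ, (∀ g, 0 ≤ ν g) ∧ x = ∑ g ∈ G, ν g • g}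

lemma coneSet_mono {G G' : Finset (Euc n)} (h : G ⊆ G') : coneSet G ⊆ coneSet G' := by
  classical
  rintro x ⟨ν, hν, rfl⟩
  refine ⟨fun g => if g ∈ G then ν g else 0, ?_, ?_⟩
  · intro g
    by_cases hg : g ∈ G
    · simp only [if_pos hg]; exact hν g
    · simp only [if_neg hg]; exact le_refl 0
  · rw [← Finset.sum_subset h (fun g _ hgn => by simp only [if_neg hgn, zero_smul])]
    apply Finset.sum_congr rfl
    intro g hg
    simp only [if_pos hg]

lemma zero_mem_coneSet (G : Finset (Euc n)) : (0 : Euc n) ∈ coneSet G :=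
  ⟨fun _ => 0, fun _ => le_refl 0, by simp⟩

lemma smul_mem_coneSet {G : Finset (Euc n)} {x : Euc n} {r : ℝ} (hr : 0 ≤ r)
    (hx : x ∈ coneSet G) : r • x ∈ coneSet G := by
  obtain ⟨ν, hν, rfl⟩ := hx
  refine ⟨fun g => r * ν g, fun g => mul_nonneg hr (hν g), ?_⟩
  rw [Finset.smul_sum]
  apply Finset.sum_congr rfl
  intro g _
  rw [smul_smul]

lemma coneSet_caratheodory :
    ∀ G : Finset (Euc n), ∀ x ∈ coneSet G,
      ∃ τ : Finset (Euc n), τ ⊆ G ∧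
        LinearIndependent ℝ (fun i : τ => (i : Euc n)) ∧ x ∈ coneSet τ := by
  classical
  intro G
  induction G using Finset.strongInduction with
  | _ G ih =>
    intro x hx
    by_cases hli : LinearIndependent ℝ (fun i : G => (i : Euc n))
    · exact ⟨G, Finset.Subset.refl G, hli, hx⟩
    · obtain ⟨g₀, hg₀sum, i₀, hi₀⟩ := Fintype.not_linearIndependent_iff.1 hli
      obtain ⟨d, hdsum, i₁, hd₁⟩ :
          ∃ d : {y // y ∈ G} → ℝ, (∑ i : {y // y ∈ G}, d i • (i : Euc n)) = 0 ∧
            ∃ i, 0 < d i := by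
        rcases lt_trichotomy (g₀ i₀) 0 with h | h | h
        · refine ⟨fun i => -g₀ i, ?_, i₀, by simpa using neg_pos.2 h⟩
          simp only [neg_smul, Finset.sum_neg_distrib, hg₀sum, neg_zero]
        · exact absurd h hi₀
        · exact ⟨g₀, hg₀sum, i₀, h⟩
      obtain ⟨ν, hν, hxeq⟩ := hx
      set T : Finset {y // y ∈ G} := Finset.univ.filter (fun i => 0 < d i) with hT
      have hTne : T.Nonempty := ⟨i₁, by simp [hT, hd₁]⟩
      obtain ⟨istar, histar, hmin⟩ := Finset.exists_min_image T (fun i => ν ↑i / d i) hTne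
      have hdstar : 0 < d istar := by
        have h2 := histar; rw [hT, Finset.mem_filter] at h2; exact h2.2
      set t : ℝ := ν ↑istar / d istar with htdef
      have ht0 : 0 ≤ t := div_nonneg (hν _) (le_of_lt hdstar)
      set D : Euc n → ℝ := fun g => if h : g ∈ G then d ⟨g, h⟩ else 0 with hD
      set ν' : Euc n → ℝ := fun g => ν g - t * D g with hν'def
      have hν'eq : ∀ g, ν' g = ν g - t * D g := fun g => rfl
      have hDpos : ∀ (g) (hg : g ∈ G), D g = d ⟨g, hg⟩ := by
        intro g hg
        simp only [hD, dif_pos hg]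
      have hDneg : ∀ (g), g ∉ G → D g = 0 := by
        intro g hg
        simp only [hD, dif_neg hg]
      have hν'0 : ∀ g, 0 ≤ ν' g := by
        intro g
        rw [hν'eq]
        by_cases hg : g ∈ G
        · rw [hDpos g hg]
          by_cases hdg : 0 < d ⟨g, hg⟩
          · have hmem : (⟨g, hg⟩ : {y // y ∈ G}) ∈ T := by simp [hT, hdg]
            have h3 := hmin _ hmem
            have h2 : t * d ⟨g, hg⟩ ≤ ν g := by
              have h4 : t ≤ ν g / d ⟨g, hg⟩ := h3
              rw [le_div_iff₀ hdg] at h4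
              exact h4
            linarith
          · push_neg at hdg
            have h5 : t * d ⟨g, hg⟩ ≤ 0 := mul_nonpos_of_nonneg_of_nonpos ht0 hdg
            have h6 := hν g
            linarith
        · rw [hDneg g hg, mul_zero, sub_zero]; exact hν g
      have hDsum : ∑ g ∈ G, D g • g = 0 := by
        rw [← Finset.sum_attach G (fun g => D g • g)]
        rw [Finset.univ_eq_attach] at hdsum
        rw [← hdsum]
        apply Finset.sum_congr rfl
        intro i _
        rw [hDpos ↑i i.2]
      have hxeq' : x = ∑ g ∈ G, ν' g • g := by
        have hcg : ∀ g ∈ G, ν' g • g = ν g • g - t • (D g • g) := by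
          intro g _
          rw [hν'eq, sub_smul, mul_smul]
        rw [Finset.sum_congr rfl hcg, Finset.sum_sub_distrib, ← Finset.smul_sum, hDsum,
          smul_zero, sub_zero]
        exact hxeq
      have hνstar : ν' ↑istar = 0 := by
        rw [hν'eq, hDpos ↑istar istar.2, htdef, div_mul_cancel₀ _ (ne_of_gt hdstar), sub_self]
      have hxerase : x ∈ coneSet (G.erase ↑istar) := by
        refine ⟨ν', hν'0, ?_⟩
        rw [hxeq', Finset.sum_erase G (by rw [hνstar, zero_smul])]
      obtain ⟨τ, hτsub, hτli, hτmem⟩ :=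
        ih (G.erase ↑istar) (Finset.erase_ssubset istar.2) x hxerase
      exact ⟨τ, hτsub.trans (Finset.erase_subset _ _), hτli, hτmem⟩

lemma isClosed_coneSet_of_linearIndependent {G : Finset (Euc n)}
    (h : LinearIndependent ℝ (fun i : G => (i : Euc n))) : IsClosed (coneSet G) := by
  classical
  set f : ({y // y ∈ G} → ℝ) →ₗ[ℝ] Euc n :=
    { toFun := fun ν => ∑ i : {y // y ∈ G}, ν i • (i : Euc n)
      map_add' := by
        intro a b
        simp [add_smul, Finset.sum_add_distrib]
      map_smul' := by
        intro r a
        simp [smul_smul, Finset.smul_sum] } with hf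
  have hker : LinearMap.ker f = ⊥ := by
    rw [LinearMap.ker_eq_bot']
    intro m hm
    have := Fintype.linearIndependent_iff.1 h m hm
    funext i
    exact this i
  have hemb := LinearMap.isClosedEmbedding_of_injective hker
  have horth : IsClosed {ν : {y // y ∈ G} → ℝ | ∀ i, 0 ≤ ν i} := by
    have : {ν : {y // y ∈ G} → ℝ | ∀ i, 0 ≤ ν i} = ⋂ i, {ν | 0 ≤ ν i} := by
      ext ν; simp [Set.mem_iInter]
    rw [this]
    exact isClosed_iInter fun i => isClosed_le continuous_const (continuous_apply i)
  have himg : coneSet G = f '' {ν | ∀ i, 0 ≤ ν i} := by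
    ext x
    constructor
    · rintro ⟨ν, hν, rfl⟩
      refine ⟨fun i => ν ↑i, fun i => hν ↑i, ?_⟩
      show ∑ i : {y // y ∈ G}, ν ↑i • (i : Euc n) = _
      rw [Finset.sum_coe_sort G (fun g => ν g • g)]
    · rintro ⟨ν₀, hν₀, rfl⟩
      refine ⟨fun g => if h : g ∈ G then ν₀ ⟨g, h⟩ else 0, ?_, ?_⟩
      · intro g
        by_cases hg : g ∈ G
        · simp only [dif_pos hg]; exact hν₀ _
        · simp only [dif_neg hg]; exact le_refl 0
      · show ∑ i : {y // y ∈ G}, ν₀ i • (i : Euc n) = _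
        rw [← Finset.sum_attach G (fun g => (if h : g ∈ G then ν₀ ⟨g, h⟩ else 0) • g),
          Finset.univ_eq_attach]
        apply Finset.sum_congr rfl
        intro i _
        simp only [dif_pos i.2]
  rw [himg]
  exact hemb.isClosedMap _ horth

lemma isClosed_coneSet (G : Finset (Euc n)) : IsClosed (coneSet G) := by
  classical
  have hcover : coneSet G =
      ⋃ τ ∈ (G.powerset.filter
        (fun τ : Finset (Euc n) => LinearIndependent ℝ (fun i : {y // y ∈ τ} => (i : Euc n)))), coneSet τ := by
    ext x
    simp only [Set.mem_iUnion, Finset.mem_filter, Finset.mem_powerset]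
    constructor
    · intro hx
      obtain ⟨τ, hsub, hli, hmem⟩ := coneSet_caratheodory G x hx
      exact ⟨τ, ⟨hsub, hli⟩, hmem⟩
    · rintro ⟨τ, ⟨hsub, -⟩, hmem⟩
      exact coneSet_mono hsub hmem
  rw [hcover]
  apply Set.Finite.isClosed_biUnion (Finset.finite_toSet _)
  intro τ hτ
  rw [Finset.mem_coe, Finset.mem_filter] at hτ
  exact isClosed_coneSet_of_linearIndependent hτ.2

end Aux4
section Aux5
variable {n : ℕ}

lemma sub_mem_coneSet {S₀ : Finset (Euc n)} {cF p : Euc n}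
    (hp : p ∈ convexHull ℝ (S₀ : Set (Euc n))) :
    p - cF ∈ coneSet (S₀.image (fun s => s - cF)) := by
  classical
  rw [Finset.convexHull_eq] at hp
  obtain ⟨w, hw0, hw1, hwp⟩ := hp
  have hp_eq : p = ∑ s ∈ S₀, w s • s := by
    rw [← hwp, Finset.centerMass_eq_of_sum_1 _ id hw1]
    simp [id]
  have hsub : ∑ s ∈ S₀, w s • (s - cF) = p - cF := by
    rw [Finset.sum_congr rfl (fun s _ => smul_sub (w s) s cF), Finset.sum_sub_distrib,
      ← Finset.sum_smul, hw1, one_smul, ← hp_eq]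
  refine ⟨fun g => ∑ s ∈ S₀.filter (fun s => s - cF = g), w s, ?_, ?_⟩
  · intro g
    apply Finset.sum_nonneg
    intro s hs
    exact hw0 s (Finset.mem_filter.1 hs).1
  · rw [← hsub,
      ← Finset.sum_fiberwise_of_maps_to (fun s hs => Finset.mem_image_of_mem (fun s => s - cF) hs)
        (fun s => w s • (s - cF))]
    apply Finset.sum_congr rfl
    intro g hg
    rw [Finset.sum_smul]
    apply Finset.sum_congr rfl
    intro s hs
    have h5 : s - cF = g := (Finset.mem_filter.1 hs).2
    rw [h5]

lemma coneSet_image_cases {S₀ : Finset (Euc n)} {cF x : Euc n}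
    (hx : x ∈ coneSet (S₀.image (fun s => s - cF))) :
    x = 0 ∨ ∃ lam : ℝ, 0 < lam ∧ cF + lam⁻¹ • x ∈ convexHull ℝ (S₀ : Set (Euc n)) := by
  classical
  obtain ⟨ν, hν, hxe⟩ := hx
  set G := S₀.image (fun s => s - cF) with hG
  set lam : ℝ := ∑ g ∈ G, ν g with hlam
  rcases eq_or_lt_of_le (Finset.sum_nonneg (fun g _ => hν g) : (0:ℝ) ≤ lam) with h0 | hlt
  · left
    rw [hxe]
    apply Finset.sum_eq_zero
    intro g hg
    rw [(Finset.sum_eq_zero_iff_of_nonneg (fun g _ => hν g)).1 h0.symm g hg, zero_smul]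
  · right
    have hzmem : ∀ g ∈ G, cF + g ∈ (S₀ : Set (Euc n)) := by
      intro g hg
      obtain ⟨s, hs, rfl⟩ := Finset.mem_image.1 hg
      rw [add_sub_cancel]
      exact hs
    have hcm := Finset.centerMass_mem_convexHull G (fun g _ => hν g) hlt
      (fun g hg => hzmem g hg)
    have hcme : G.centerMass ν (fun g => cF + g) = cF + lam⁻¹ • x := by
      rw [Finset.centerMass, ← hlam]
      have h2 : ∑ g ∈ G, ν g • (cF + g) = lam • cF + x := by
        rw [Finset.sum_congr rfl (fun g _ => smul_add (ν g) cF g), Finset.sum_add_distrib,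
          ← Finset.sum_smul, ← hlam, ← hxe]
      rw [h2, smul_add, smul_smul, inv_mul_cancel₀ (ne_of_gt hlt), one_smul]
    rw [hcme] at hcm
    exact ⟨lam, hlt, hcm⟩

lemma not_interior_of_inner_eq {P : Set (Euc n)} {u cc : Euc n} {b : ℝ} (hu : u ≠ 0)
    (hsup : ∀ x ∈ P, ⟪x, u⟫ ≤ b) (hcb : ⟪cc, u⟫ = b) : cc ∉ interior P := by
  intro h
  obtain ⟨ε, hε, hball⟩ := Metric.isOpen_iff.1 isOpen_interior cc h
  have hu0 : 0 < ‖u‖ := norm_pos_iff.2 hu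
  set x : Euc n := (ε / (2 * ‖u‖)) • u + cc with hx
  have hd : dist x cc = ε / 2 := by
    rw [hx, dist_add_self_left, norm_smul, Real.norm_eq_abs,
      abs_of_pos (by positivity : (0:ℝ) < ε / (2 * ‖u‖))]
    field_simp
  have hxP : x ∈ P := by
    apply interior_subset (hball _)
    rw [Metric.mem_ball, hd]
    linarith
  have : ⟪x, u⟫ = b + (ε / (2 * ‖u‖)) * ‖u‖ ^ 2 := by
    rw [hx, inner_add_left, real_inner_smul_left, hcb, real_inner_self_eq_norm_sq]
    ring
  have h2 := hsup x hxP
  rw [this] at h2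
  have h3 : 0 < (ε / (2 * ‖u‖)) * ‖u‖ ^ 2 := by positivity
  linarith

end Aux5
section Aux6
variable {n : ℕ}

set_option maxHeartbeats 2000000 in
lemma quantitative_core {P : Set (Euc n)} {S₀ : Finset (Euc n)}
    (hPeq : P = convexHull ℝ (S₀ : Set (Euc n)))
    (h0P : (0 : Euc n) ∈ interior P)
    {SA : AffineSubspace ℝ (Euc n)} {AF : Set (Euc n)} (hSA : AF = (SA : Set (Euc n)))
    {cF : Euc n} (hAP : AF ∩ P = {cF})
    {u : Euc n} {b : ℝ} (hu : u ≠ 0) (hsup : ∀ x ∈ P, ⟪x, u⟫ ≤ b) (hcb : ⟪cF, u⟫ = b) :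
    ∃ C δ₀ : ℝ, 0 < C ∧ 0 < δ₀ ∧
      ∀ K : Set (Euc n), Convex ℝ K → IsCompact K → (0 : Euc n) ∈ interior K →
        ∀ tF : ℝ, ∀ xF : Euc n, 0 < tF → (tF • AF) ∩ interior K = ∅ →
          xF ∈ (tF • AF) ∩ frontier K →
          Metric.hausdorffDist K P ≤ δ₀ →
          ‖xF - cF‖ ≤ C * Metric.hausdorffDist K P ∧
          |tF - 1| * ‖cF‖ ≤ C * Metric.hausdorffDist K P := by
  classical
  have hPconv : Convex ℝ P := by rw [hPeq]; exact convex_convexHull ℝ _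
  have hPcomp : IsCompact P := by rw [hPeq]; exact (S₀.finite_toSet).isCompact_convexHull ℝ
  have hPne : P.Nonempty := ⟨0, interior_subset h0P⟩
  have hcF_mem : cF ∈ AF ∩ P := by rw [hAP]; rfl
  have hcFA : cF ∈ AF := hcF_mem.1
  have hcFP : cF ∈ P := hcF_mem.2
  have hb : 0 < b := face_b_pos h0P hu hsup
  have hcF0 : cF ≠ 0 := by
    intro h; rw [h] at hcb; simp at hcb; rw [← hcb] at hb; exact lt_irrefl 0 hb
  set W : Submodule ℝ (Euc n) := SA.direction with hW
  have hcFSA : cF ∈ SA := by rw [hSA] at hcFA; exact hcFA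
  have hcW : cF ∉ W := by
    intro hmem
    have h2 : ((1:ℝ)/2) • cF ∈ AF := by
      have h3 : (-(((1:ℝ)/2) • cF)) + cF ∈ SA := by
        have := AffineSubspace.vadd_mem_of_mem_direction
          (Submodule.neg_mem _ (Submodule.smul_mem _ ((1:ℝ)/2) hmem)) hcFSA
        simpa [vadd_eq_add] using this
      have h4 : (-(((1:ℝ)/2) • cF)) + cF = ((1:ℝ)/2) • cF := by
        rw [← sub_eq_neg_add, ← one_smul ℝ cF, smul_smul, ← sub_smul]
        norm_num
      rw [hSA, ← h4]
      exact h3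
    have h5 : ((1:ℝ)/2) • cF ∈ P := by
      have := hPconv (interior_subset h0P) hcFP (by norm_num : (0:ℝ) ≤ 1/2)
        (by norm_num : (0:ℝ) ≤ 1/2) (by norm_num)
      simpa using this
    have h6 : ((1:ℝ)/2) • cF ∈ AF ∩ P := ⟨h2, h5⟩
    rw [hAP, Set.mem_singleton_iff] at h6
    apply hcF0
    have h7 : ((1:ℝ)/2 - 1) • cF = 0 := by rw [sub_smul, one_smul, h6]; simp
    have h9 : ((1:ℝ)/2 - 1) ≠ 0 := by norm_num
    exact (smul_eq_zero.1 h7).resolve_left h9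
  set c' : Euc n := cF - (orthogonalProjection W cF : Euc n) with hc'
  have hc'W : c' ∈ Wᗮ := Submodule.sub_starProjection_mem_orthogonal (K := W) cF
  have hc'0 : c' ≠ 0 := by
    intro h
    apply hcW
    have h1 : cF = (orthogonalProjection W cF : Euc n) := sub_eq_zero.1 h
    rw [h1]
    exact Submodule.coe_mem _
  set σ : ℝ := ⟪cF, c'⟫ with hσ
  have hσval : σ = ‖c'‖ ^ 2 := by
    rw [hσ]
    have h1 : cF = c' + (orthogonalProjection W cF : Euc n) := by rw [hc']; abel
    nth_rewrite 1 [h1]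
    rw [inner_add_left, real_inner_self_eq_norm_sq]
    have h2 : ⟪(orthogonalProjection W cF : Euc n), c'⟫ = 0 :=
      (Submodule.mem_orthogonal W c').1 hc'W _ (Submodule.coe_mem _)
    rw [h2]
    ring
  have hσpos : 0 < σ := by
    rw [hσval]
    have : 0 < ‖c'‖ := norm_pos_iff.2 hc'0
    positivity
  set G : Finset (Euc n) := S₀.image (fun s => s - cF) with hG
  set CC : Set (Euc n) := coneSet G with hCC
  have hCCclosed : IsClosed CC := isClosed_coneSet G
  have hCC0 : (0 : Euc n) ∈ CC := zero_mem_coneSet G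
  have hCCne : CC.Nonempty := ⟨0, hCC0⟩
  have hPC : ∀ p ∈ P, p - cF ∈ CC := by
    intro p hp
    rw [hPeq] at hp
    exact sub_mem_coneSet hp
  have hnotC : ∀ v : Euc n, v - (⟪v, c'⟫ / σ) • cF ∈ W → 0 ≤ ⟪v, c'⟫ → v ≠ 0 → v ∉ CC := by
    intro v hvW hvs hv0 hvC
    rcases coneSet_image_cases hvC with h | ⟨lam, hlam, hp⟩
    · exact hv0 h
    · set s : ℝ := ⟪v, c'⟫ / σ with hs
      have hs0 : 0 ≤ s := div_nonneg hvs (le_of_lt hσpos)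
      set w : Euc n := v - s • cF with hwdef
      have hwW : w ∈ W := hvW
      have hvdec : v = w + s • cF := by rw [hwdef]; abel
      rw [← hPeq] at hp
      set p : Euc n := cF + lam⁻¹ • v with hpdef
      set β : ℝ := 1 + lam⁻¹ * s with hβ
      have hβ1 : 1 ≤ β := by
        rw [hβ]
        have : 0 ≤ lam⁻¹ * s := mul_nonneg (le_of_lt (inv_pos.2 hlam)) hs0
        linarith
      have hβ0 : 0 < β := lt_of_lt_of_le one_pos hβ1
      have hpdec : p = β • cF + lam⁻¹ • w := by
        rw [hpdef, hβ]
        nth_rewrite 1 [hvdec]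
        rw [smul_add, add_smul, one_smul, smul_smul]
        abel
      have hqeq : β⁻¹ • p = cF + (β⁻¹ * lam⁻¹) • w := by
        rw [hpdec, smul_add, smul_smul, smul_smul, inv_mul_cancel₀ (ne_of_gt hβ0), one_smul]
      have hqA : β⁻¹ • p ∈ AF := by
        have h2 : ((β⁻¹ * lam⁻¹) • w) + cF ∈ SA :=
          AffineSubspace.vadd_mem_of_mem_direction (Submodule.smul_mem _ _ hwW) hcFSA
        rw [hSA, hqeq, add_comm]
        exact h2
      have hqP : β⁻¹ • p ∈ P := by
        have hβinv1 : β⁻¹ ≤ 1 := inv_le_one_of_one_le₀ hβ1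
        have h1 := hPconv (interior_subset h0P) hp
          (by linarith : (0:ℝ) ≤ 1 - β⁻¹) (le_of_lt (inv_pos.2 hβ0)) (by ring)
        rw [smul_zero, zero_add] at h1
        exact h1
      have hqc : β⁻¹ • p = cF := by
        have h1 : β⁻¹ • p ∈ AF ∩ P := ⟨hqA, hqP⟩
        rw [hAP, Set.mem_singleton_iff] at h1
        exact h1
      have hw0 : w = 0 := by
        have h1 : cF + (β⁻¹ * lam⁻¹) • w = cF := by rw [← hqeq, hqc]
        have h2 : (β⁻¹ * lam⁻¹) • w = 0 := by
          have h3 := h1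
          rwa [add_eq_left] at h3
        have h3 : β⁻¹ * lam⁻¹ ≠ 0 :=
          mul_ne_zero (ne_of_gt (inv_pos.2 hβ0)) (ne_of_gt (inv_pos.2 hlam))
        exact (smul_eq_zero.1 h2).resolve_left h3
      have hsne : s ≠ 0 := by
        intro h
        apply hv0
        rw [hvdec, hw0, h, zero_smul, add_zero]
      have hspos : 0 < s := lt_of_le_of_ne hs0 (Ne.symm hsne)
      have hβgt : 1 < β := by
        rw [hβ]
        have : 0 < lam⁻¹ * s := mul_pos (inv_pos.2 hlam) hspos
        linarith
      have hpeq2 : p = β • cF := by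
        rw [hpdec, hw0, smul_zero, add_zero]
      have hcint : cF ∈ interior P := by
        have hβlt : β⁻¹ < 1 := inv_lt_one_of_one_lt₀ hβgt
        have h1 := hPconv.combo_interior_self_mem_interior h0P hp
          (by linarith : (0:ℝ) < 1 - β⁻¹) (le_of_lt (inv_pos.2 hβ0)) (by ring)
        rw [smul_zero, zero_add, hpeq2, smul_smul, inv_mul_cancel₀ (ne_of_gt hβ0), one_smul] at h1
        exact h1
      exact not_interior_of_inner_eq hu hsup hcb hcint
  set D : Set (Euc n) :=
    {v : Euc n | ‖v‖ = 1 ∧ v - (⟪v, c'⟫ / σ) • cF ∈ W ∧ 0 ≤ ⟪v, c'⟫} with hD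
  have hDclosed : IsClosed D := by
    have h1 : D = {v : Euc n | ‖v‖ = 1} ∩
        ({v : Euc n | v - (⟪v, c'⟫ / σ) • cF ∈ W} ∩ {v : Euc n | 0 ≤ ⟪v, c'⟫}) := by
      ext v; simp [hD, Set.mem_inter_iff, and_assoc]
    rw [h1]
    apply IsClosed.inter
    · exact isClosed_eq continuous_norm continuous_const
    · apply IsClosed.inter
      · have hWclosed : IsClosed (W : Set (Euc n)) := Submodule.closed_of_finiteDimensional W
        have hcont : Continuous fun v : Euc n => v - (⟪v, c'⟫ / σ) • cF :=
          continuous_id.sub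
            (((Continuous.inner continuous_id continuous_const).div_const σ).smul
              continuous_const)
        exact hWclosed.preimage hcont
      · exact isClosed_le continuous_const (Continuous.inner continuous_id continuous_const)
  have hDcomp : IsCompact D := by
    apply IsCompact.of_isClosed_subset (isCompact_closedBall (0 : Euc n) 1) hDclosed
    intro v hv
    rw [Metric.mem_closedBall, dist_zero_right, hv.1]
  have hDne : D.Nonempty := by
    refine ⟨‖cF‖⁻¹ • cF, ?_, ?_, ?_⟩
    · rw [norm_smul, norm_inv, norm_norm, inv_mul_cancel₀ (norm_ne_zero_iff.2 hcF0)]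
    · have h1 : ⟪‖cF‖⁻¹ • cF, c'⟫ = ‖cF‖⁻¹ * σ := by rw [real_inner_smul_left, hσ]
      rw [h1]
      have h2 : ‖cF‖⁻¹ * σ / σ = ‖cF‖⁻¹ := by rw [mul_div_assoc, div_self (ne_of_gt hσpos), mul_one]
      rw [h2, sub_self]
      exact Submodule.zero_mem W
    · rw [real_inner_smul_left, ← hσ]
      exact mul_nonneg (inv_nonneg.2 (norm_nonneg cF)) (le_of_lt hσpos)
  obtain ⟨v₀, hv₀D, hv₀min⟩ :=
    hDcomp.exists_isMinOn hDne (Metric.continuous_infDist_pt CC).continuousOn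
  set κ : ℝ := Metric.infDist v₀ CC with hκdef
  have hκpos : 0 < κ := by
    rw [hκdef]
    apply (IsClosed.notMem_iff_infDist_pos hCCclosed hCCne).1
    apply hnotC v₀ hv₀D.2.1 hv₀D.2.2
    intro h
    have h2 := hv₀D.1
    rw [h] at h2
    simp at h2
  have hκbound : ∀ v : Euc n, v - (⟪v, c'⟫ / σ) • cF ∈ W → 0 ≤ ⟪v, c'⟫ →
      κ * ‖v‖ ≤ Metric.infDist v CC := by
    intro v hvW hvs
    rcases eq_or_ne v 0 with rfl | hv0
    · simp [Metric.infDist_nonneg]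
    · have hnv : 0 < ‖v‖ := norm_pos_iff.2 hv0
      set vh : Euc n := ‖v‖⁻¹ • v with hvh
      have hvhD : vh ∈ D := by
        refine ⟨?_, ?_, ?_⟩
        · rw [hvh, norm_smul, norm_inv, norm_norm, inv_mul_cancel₀ (ne_of_gt hnv)]
        · have h1 : ⟪vh, c'⟫ = ‖v‖⁻¹ * ⟪v, c'⟫ := by rw [hvh, real_inner_smul_left]
          have h2 : vh - (⟪vh, c'⟫ / σ) • cF = ‖v‖⁻¹ • (v - (⟪v, c'⟫ / σ) • cF) := by
            rw [hvh, h1, smul_sub, smul_smul]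
            congr 2
            field_simp
          rw [h2]
          exact Submodule.smul_mem _ _ hvW
        · rw [hvh, real_inner_smul_left]
          exact mul_nonneg (inv_nonneg.2 (norm_nonneg v)) hvs
      apply le_infDist'' hCCne
      intro y hy
      have hy' : ‖v‖⁻¹ • y ∈ CC := smul_mem_coneSet (inv_nonneg.2 (norm_nonneg v)) hy
      have h1 : ‖v‖ * dist vh (‖v‖⁻¹ • y) = dist v y := by
        rw [dist_eq_norm, dist_eq_norm, hvh, ← smul_sub, norm_smul, Real.norm_eq_abs,
          abs_of_pos (inv_pos.2 hnv), ← mul_assoc, mul_inv_cancel₀ (ne_of_gt hnv), one_mul]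
      rw [← h1]
      have h2 : κ ≤ dist vh (‖v‖⁻¹ • y) :=
        le_trans (hv₀min hvhD) (Metric.infDist_le_dist_of_mem hy')
      nlinarith [dist_nonneg (x := vh) (y := ‖v‖⁻¹ • y)]
  obtain ⟨r₀, hr₀pos, hr₀ball⟩ := Metric.isOpen_iff.1 isOpen_interior 0 h0P
  set Cbig : ℝ := (1 + ‖cF‖ / r₀) / κ + ‖cF‖ / r₀ + ‖c'‖ * ‖cF‖ / (κ * σ) + 1 / κ + 1 with hCbig
  have hterm1 : (0:ℝ) ≤ (1 + ‖cF‖ / r₀) / κ := by positivity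
  have hterm2 : (0:ℝ) ≤ ‖cF‖ / r₀ := by positivity
  have hterm3 : (0:ℝ) ≤ ‖c'‖ * ‖cF‖ / (κ * σ) := by positivity
  have hterm4 : (0:ℝ) ≤ 1 / κ := by positivity
  have hCpos : 0 < Cbig := by rw [hCbig]; linarith
  refine ⟨Cbig, r₀ / 2, hCpos, by linarith, ?_⟩
  intro K hKconv hKcomp h0K tF xF htF hdisj hxmem hδsmall
  set δ : ℝ := Metric.hausdorffDist K P with hδdef
  have hδnn : 0 ≤ δ := Metric.hausdorffDist_nonneg
  have hKne : K.Nonempty := ⟨0, interior_subset h0K⟩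
  have hKclosed : IsClosed K := hKcomp.isClosed
  have hedist : EMetric.hausdorffEdist K P ≠ ⊤ :=
    Metric.hausdorffEdist_ne_top_of_nonempty_of_bounded hKne hPne hKcomp.isBounded
      hPcomp.isBounded
  have hinfPK : ∀ p ∈ P, Metric.infDist p K ≤ δ := by
    intro p hp
    have h1 := Metric.infDist_le_hausdorffDist_of_mem hp
      (by rw [Metric.hausdorffEDist_comm]; exact hedist)
    rwa [Metric.hausdorffDist_comm] at h1
  have hballK : Metric.ball (0 : Euc n) (r₀ - δ) ⊆ K := by
    intro z hz
    by_contra hzK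
    obtain ⟨f, s, hfs, hsz⟩ := geometric_hahn_banach_closed_point hKconv hKclosed hzK
    set w₀ : Euc n := (InnerProductSpace.toDual ℝ (Euc n)).symm f with hw₀
    have hw₀p : ∀ x : Euc n, ⟪w₀, x⟫ = f x := fun x => InnerProductSpace.toDual_symm_apply
    have hs0 : 0 < s := by
      have := hfs 0 (interior_subset h0K)
      simpa using this
    have hw₀0 : w₀ ≠ 0 := by
      intro h
      have h1 : f z = 0 := by rw [← hw₀p z, h]; simp
      rw [h1] at hsz; linarith
    have hnw : 0 < ‖w₀‖ := norm_pos_iff.2 hw₀0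
    rw [Metric.mem_ball, dist_zero_right] at hz
    set p : Euc n := (‖z‖ + δ) • (‖w₀‖⁻¹ • w₀) with hp
    have hpP : p ∈ P := by
      apply interior_subset (hr₀ball _)
      rw [Metric.mem_ball, dist_zero_right, hp, norm_smul, norm_smul, norm_inv, norm_norm,
        Real.norm_eq_abs, abs_of_nonneg (by positivity : (0:ℝ) ≤ ‖z‖ + δ),
        inv_mul_cancel₀ (ne_of_gt hnw), mul_one]
      linarith
    obtain ⟨k, hkK, hkd⟩ := hKcomp.exists_infDist_eq_dist hKne p
    have hdk : dist p k ≤ δ := by rw [← hkd]; exact hinfPK p hpP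
    have hfp : f p = (‖z‖ + δ) * ‖w₀‖ := by
      rw [← hw₀p p, hp, real_inner_smul_right, real_inner_smul_right,
        real_inner_self_eq_norm_sq]
      have h9 : ‖w₀‖⁻¹ * ‖w₀‖ ^ 2 = ‖w₀‖ := by
        rw [pow_two, ← mul_assoc, inv_mul_cancel₀ (ne_of_gt hnw), one_mul]
      rw [h9]
    have hfz : f z ≤ ‖w₀‖ * ‖z‖ := by
      rw [← hw₀p z]; exact real_inner_le_norm w₀ z
    have hfk : f k < s := hfs k hkK
    have hdiff : f p - f k ≤ ‖w₀‖ * δ := by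
      have h1 : f p - f k = ⟪w₀, p - k⟫ := by rw [inner_sub_right, hw₀p, hw₀p]
      have h2 : ⟪w₀, p - k⟫ ≤ ‖w₀‖ * ‖p - k‖ := real_inner_le_norm _ _
      have h3 : ‖p - k‖ ≤ δ := by rw [← dist_eq_norm]; exact hdk
      nlinarith [norm_nonneg w₀]
    have hcontra : s < s := by
      calc s < f z := hsz
        _ ≤ ‖w₀‖ * ‖z‖ := hfz
        _ = (‖z‖ + δ) * ‖w₀‖ - δ * ‖w₀‖ := by ring
        _ = f p - δ * ‖w₀‖ := by rw [hfp]
        _ ≤ f k := by nlinarith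
        _ < s := hfk
    exact lt_irrefl s hcontra
  have hδhalf : δ ≤ r₀ / 2 := hδsmall
  have hrδ : 0 < r₀ - δ := by linarith
  have hcballK : Metric.closedBall (0 : Euc n) (r₀ - δ) ⊆ K := by
    have h1 : Metric.closedBall (0 : Euc n) (r₀ - δ) = closure (Metric.ball 0 (r₀ - δ)) :=
      (closure_ball 0 (ne_of_gt hrδ)).symm
    rw [h1]
    exact hKclosed.closure_subset_iff.2 hballK
  have hshrink : ∀ p ∈ P, (1 - δ / r₀) • p ∈ K := by
    intro p hp
    obtain ⟨k, hkK, hkd⟩ := hKcomp.exists_infDist_eq_dist hKne p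
    have hdk : dist p k ≤ δ := by rw [← hkd]; exact hinfPK p hp
    rcases eq_or_lt_of_le hδnn with hδ0 | hδpos
    · have hpk : p = k := by
        have h1 : dist p k ≤ 0 := by rw [← hδ0] at hdk; exact hdk
        exact dist_le_zero.1 h1
      rw [← hδ0]
      simpa [hpk] using hkK
    · have hμpos : 0 < δ / r₀ := div_pos hδpos hr₀pos
      have hμle : δ / r₀ ≤ 1/2 := by rw [div_le_iff₀ hr₀pos]; linarith
      have hfrac : (0:ℝ) ≤ (1 - δ / r₀) / (δ / r₀) :=
        div_nonneg (by linarith) (le_of_lt hμpos)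
      set ζ : Euc n := ((1 - δ / r₀) / (δ / r₀)) • (p - k) with hζ
      have hζK : ζ ∈ K := by
        apply hcballK
        rw [Metric.mem_closedBall, dist_zero_right, hζ, norm_smul, Real.norm_eq_abs,
          abs_of_nonneg hfrac]
        have h1 : ‖p - k‖ ≤ δ := by rw [← dist_eq_norm]; exact hdk
        have h2 : (1 - δ / r₀) / (δ / r₀) * δ = (1 - δ / r₀) * r₀ := by
          field_simp
          try ring
        have h3 : (1 - δ / r₀) * r₀ = r₀ - δ := by field_simp; try ring
        calc (1 - δ / r₀) / (δ / r₀) * ‖p - k‖ ≤ (1 - δ / r₀) / (δ / r₀) * δ :=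
              mul_le_mul_of_nonneg_left h1 hfrac
          _ = (1 - δ / r₀) * r₀ := h2
          _ = r₀ - δ := h3
      have hcomb := hKconv hkK hζK (by linarith : (0:ℝ) ≤ 1 - δ / r₀)
        (le_of_lt hμpos) (by ring)
      have halg : (1 - δ / r₀) • k + (δ / r₀) • ζ = (1 - δ / r₀) • p := by
        rw [hζ, smul_smul]
        have h4 : δ / r₀ * ((1 - δ / r₀) / (δ / r₀)) = 1 - δ / r₀ := by
          rw [mul_div_assoc', mul_comm, mul_div_assoc, div_self (ne_of_gt hμpos), mul_one]
        rw [h4, smul_sub]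
        abel
      rw [halg] at hcomb
      exact hcomb
  have htFlow : 1 - δ / r₀ ≤ tF := by
    by_contra hcon
    push_neg at hcon
    have hd1 : 0 < 1 - δ / r₀ := by
      have h1 : δ / r₀ < 1 := by rw [div_lt_one hr₀pos]; linarith
      linarith
    have hbc1 : tF / (1 - δ / r₀) < 1 := (div_lt_one hd1).2 hcon
    have hbc0 : 0 ≤ tF / (1 - δ / r₀) := le_of_lt (div_pos htF hd1)
    have hcomb := hKconv.combo_interior_self_mem_interior h0K (hshrink cF hcFP)
      (by linarith : (0:ℝ) < 1 - tF / (1 - δ / r₀)) hbc0 (by ring)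
    rw [smul_zero, zero_add, smul_smul, div_mul_cancel₀ _ (ne_of_gt hd1)] at hcomb
    have h2 : tF • cF ∈ (tF • AF) ∩ interior K := ⟨Set.smul_mem_smul_set hcFA, hcomb⟩
    rw [hdisj] at h2
    exact h2
  obtain ⟨hxtA, hxfr⟩ := hxmem
  obtain ⟨a, haA, haeq⟩ := Set.mem_smul_set.1 hxtA
  have hxK : xF ∈ K := hKclosed.frontier_subset hxfr
  have hdistP : Metric.infDist xF P ≤ δ := Metric.infDist_le_hausdorffDist_of_mem hxK hedist
  have hdistC : Metric.infDist (xF - cF) CC ≤ δ := by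
    refine le_trans ?_ hdistP
    apply le_infDist'' hPne
    intro p hp
    have h1 := Metric.infDist_le_dist_of_mem (x := xF - cF) (hPC p hp)
    calc Metric.infDist (xF - cF) CC ≤ dist (xF - cF) (p - cF) := h1
      _ = dist xF p := dist_sub_right xF p cF
  have haSA : a ∈ SA := by rw [hSA] at haA; exact haA
  have hacW : a - cF ∈ W := by
    have := AffineSubspace.vsub_mem_direction haSA hcFSA
    simpa [vsub_eq_sub] using this
  have hvdec : xF - cF = tF • (a - cF) + (tF - 1) • cF := by
    rw [← haeq, smul_sub, sub_smul, one_smul]; abel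
  have hinnerW : ∀ w ∈ W, ⟪w, c'⟫ = 0 := fun w hw =>
    (Submodule.mem_orthogonal W c').1 hc'W w hw
  have hℓ : ⟪xF - cF, c'⟫ = (tF - 1) * σ := by
    rw [hvdec, inner_add_left, real_inner_smul_left, real_inner_smul_left,
      hinnerW _ hacW, ← hσ]
    ring
  rcases le_or_gt 1 tF with hcase | hcase
  · -- tF ≥ 1
    have hcond1 : (xF - cF) - (⟪xF - cF, c'⟫ / σ) • cF ∈ W := by
      rw [hℓ]
      have h1 : (tF - 1) * σ / σ = tF - 1 := by field_simp
      rw [h1, hvdec]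
      have h2 : tF • (a - cF) + (tF - 1) • cF - (tF - 1) • cF = tF • (a - cF) := by abel
      rw [h2]
      exact Submodule.smul_mem _ _ hacW
    have hcond2 : 0 ≤ ⟪xF - cF, c'⟫ := by rw [hℓ]; nlinarith
    have hkb := hκbound _ hcond1 hcond2
    have hv' : κ * ‖xF - cF‖ ≤ δ := le_trans hkb hdistC
    have hnv : ‖xF - cF‖ ≤ δ / κ := by
      rw [le_div_iff₀ hκpos]
      nlinarith
    have h1 : (tF - 1) * σ ≤ ‖xF - cF‖ * ‖c'‖ := by
      rw [← hℓ]
      exact real_inner_le_norm _ _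
    constructor
    · calc ‖xF - cF‖ ≤ δ / κ := hnv
        _ = 1 / κ * δ := by ring
        _ ≤ Cbig * δ := by
            apply mul_le_mul_of_nonneg_right _ hδnn
            rw [hCbig]; linarith
    · have habs : |tF - 1| = tF - 1 := abs_of_nonneg (by linarith)
      rw [habs]
      have h3 : (tF - 1) * ‖cF‖ ≤ (‖c'‖ * ‖cF‖ / (κ * σ)) * δ := by
        rw [div_mul_eq_mul_div, le_div_iff₀ (by positivity : (0:ℝ) < κ * σ)]
        have h4 := mul_le_mul_of_nonneg_right h1 (by positivity : (0:ℝ) ≤ κ * ‖cF‖)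
        have h5 := mul_le_mul_of_nonneg_right hv'
          (by positivity : (0:ℝ) ≤ ‖c'‖ * ‖cF‖)
        nlinarith
      calc (tF - 1) * ‖cF‖ ≤ (‖c'‖ * ‖cF‖ / (κ * σ)) * δ := h3
        _ ≤ Cbig * δ := by
            apply mul_le_mul_of_nonneg_right _ hδnn
            rw [hCbig]; linarith
  · -- tF < 1
    have habs : |tF - 1| = 1 - tF := by rw [abs_of_nonpos (by linarith)]; ring
    have htF1 : 1 - tF ≤ δ / r₀ := by linarith
    set w' : Euc n := tF • (a - cF) with hw'
    have hw'W : w' ∈ W := Submodule.smul_mem _ _ hacW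
    have hw'c : ⟪w', c'⟫ = 0 := hinnerW _ hw'W
    have hcond1 : w' - (⟪w', c'⟫ / σ) • cF ∈ W := by
      rw [hw'c, zero_div, zero_smul, sub_zero]; exact hw'W
    have hkb := hκbound w' hcond1 (by rw [hw'c])
    have hd2 : dist w' (xF - cF) = (1 - tF) * ‖cF‖ := by
      rw [dist_eq_norm, hvdec]
      have h3 : w' - (w' + (tF - 1) • cF) = (1 - tF) • cF := by
        have h4 : (1 - tF) • cF = -((tF - 1) • cF) := by
          rw [← neg_smul]; congr 1; ring
        rw [h4]; abel
      rw [h3, norm_smul, Real.norm_eq_abs, abs_of_nonneg (by linarith : (0:ℝ) ≤ 1 - tF)]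
    have hdist2 : Metric.infDist w' CC ≤ δ + (1 - tF) * ‖cF‖ := by
      have h1 := Metric.infDist_le_infDist_add_dist (s := CC) (x := w') (y := xF - cF)
      rw [hd2] at h1
      linarith
    have hnw' : κ * ‖w'‖ ≤ δ + (1 - tF) * ‖cF‖ := le_trans hkb hdist2
    have hbound1 : (1 - tF) * ‖cF‖ ≤ (‖cF‖ / r₀) * δ := by
      rw [div_mul_eq_mul_div, le_div_iff₀ hr₀pos]
      have h1 := mul_le_mul_of_nonneg_right htF1 (norm_nonneg cF)
      rw [div_mul_eq_mul_div] at h1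
      rw [le_div_iff₀ hr₀pos] at h1
      nlinarith
    have hnv : ‖xF - cF‖ ≤ ‖w'‖ + (1 - tF) * ‖cF‖ := by
      rw [hvdec]
      calc ‖w' + (tF - 1) • cF‖ ≤ ‖w'‖ + ‖(tF - 1) • cF‖ := norm_add_le _ _
        _ = ‖w'‖ + (1 - tF) * ‖cF‖ := by
            rw [norm_smul (tF - 1) cF, Real.norm_eq_abs,
              abs_of_nonpos (by linarith : tF - 1 ≤ 0)]
            ring
    have h5 : ‖w'‖ ≤ ((1 + ‖cF‖ / r₀) / κ) * δ := by
      rw [div_mul_eq_mul_div, le_div_iff₀ hκpos]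
      nlinarith
    constructor
    · have h6 : ‖xF - cF‖ ≤ ((1 + ‖cF‖ / r₀) / κ) * δ + (‖cF‖ / r₀) * δ := by linarith
      calc ‖xF - cF‖ ≤ ((1 + ‖cF‖ / r₀) / κ) * δ + (‖cF‖ / r₀) * δ := h6
        _ = ((1 + ‖cF‖ / r₀) / κ + ‖cF‖ / r₀) * δ := by ring
        _ ≤ Cbig * δ := by
            apply mul_le_mul_of_nonneg_right _ hδnn
            rw [hCbig]; linarith
    · rw [habs]
      calc (1 - tF) * ‖cF‖ ≤ (‖cF‖ / r₀) * δ := hbound1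
        _ ≤ Cbig * δ := by
            apply mul_le_mul_of_nonneg_right _ hδnn
            rw [hCbig]; linarith

end Aux6
/-- **Proposition 2.2.** For a polytope `P` with a family of affine subspaces satisfying
(a), (b), (c), and a convex body `K` with `0 ∈ int(P ∩ K)`, the tangent points satisfy
`⟨x_F, x_{F*}⟩ = ⟨y_F, y_{F*}⟩ = 1`; moreover, for each face `F` there are constants
`C, δ₀ > 0` depending only on `P`, `F`, `A_F` such that if `d_H(K,P) ≤ δ₀` then
`|x_F − c_F| ≤ C·d_H(K,P)` and `|y_F − c_F| ≤ C·d_H(K,P)`. -/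
theorem tangent_points_duality_and_stability (n : ℕ) (P : Set (Euc n)) (hP : IsPolytope P)
    (h0P : (0 : Euc n) ∈ interior P)
    (A : Set (Euc n) → Set (Euc n)) (c : Set (Euc n) → Euc n) (hA : GoodFamily P A c)
    (F : Set (Euc n)) (hF : IsFaceOf P F) :
    (∀ K : Set (Euc n), IsConvexBody K → (0 : Euc n) ∈ interior (P ∩ K) →
      ∀ (t : Set (Euc n) → ℝ) (x y : Set (Euc n) → Euc n),
        (∀ G, IsFaceOf P G → TangentPointAt K (A G) (c G) (t G) (x G) (y G)) →
        (∀ G, IsFaceOf (polarSet P) G →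
          TangentPointAt (polarSet K) (A G) (c G) (t G) (x G) (y G)) →
        ⟪x F, x (dualFace P F)⟫ = 1 ∧ ⟪y F, y (dualFace P F)⟫ = 1) ∧
    ∃ C δ₀ : ℝ, 0 < C ∧ 0 < δ₀ ∧
      ∀ K : Set (Euc n), IsConvexBody K → (0 : Euc n) ∈ interior (P ∩ K) →
        ∀ (t : Set (Euc n) → ℝ) (x y : Set (Euc n) → Euc n),
          (∀ G, IsFaceOf P G → TangentPointAt K (A G) (c G) (t G) (x G) (y G)) →
          Metric.hausdorffDist K P ≤ δ₀ →
          ‖x F - c F‖ ≤ C * Metric.hausdorffDist K P ∧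
          ‖y F - c F‖ ≤ C * Metric.hausdorffDist K P := by
  obtain ⟨hA1, hA2⟩ := hA
  obtain ⟨⟨SA, hSA⟩, hAPF, hcrel, hdimF⟩ := (hA1 F hF).1
  have hcond := (hA1 F hF).2
  have hcFA : c F ∈ A F := by
    have h1 : c F ∈ A F ∩ P := by rw [hAPF]; exact Set.mem_singleton _
    exact h1.1
  have hcFP : c F ∈ P := by
    have h1 : c F ∈ A F ∩ P := by rw [hAPF]; exact Set.mem_singleton _
    exact h1.2
  have hFstar : IsFaceOf (polarSet P) (dualFace P F) := isFaceOf_dualFace h0P hF hcrel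
  obtain ⟨⟨SAd, hSAd⟩, hAPFd, hcreld, hdimFd⟩ := hA2 _ hFstar
  have hcFdA : c (dualFace P F) ∈ A (dualFace P F) := by
    have h1 : c (dualFace P F) ∈ A (dualFace P F) ∩ polarSet P := by
      rw [hAPFd]; exact Set.mem_singleton _
    exact h1.1
  have hdual_le := setDim_dualFace_le h0P hF
  have hrank : n ≤ setDim (A F) + 1 + setDim (A (dualFace P F)) := by omega
  -- line-closure of A F
  have hlineA : ∀ z ∈ A F, ∀ z' ∈ A F, ∀ s : ℝ, z + s • (z' - z) ∈ A F := by
    intro z hz z' hz' s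
    rw [hSA] at hz hz' ⊢
    have h1 := AffineSubspace.smul_vsub_vadd_mem SA s hz' hz hz
    simpa [vsub_eq_sub, vadd_eq_add, add_comm] using h1
  constructor
  · -- Part 1: duality of tangent points
    intro K hK h0K t x y hx hy
    obtain ⟨hKconv, hKcomp, hKint⟩ := hK
    have h0K' : (0 : Euc n) ∈ interior K := interior_mono Set.inter_subset_right h0K
    obtain ⟨⟨htFpos, hdisjF, hxmemF, -⟩, hyF⟩ := hx F hF
    obtain ⟨⟨htFdpos, hdisjFd, hxmemFd, -⟩, hyFd⟩ := hy _ hFstar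
    obtain ⟨a, haA, haeq⟩ := Set.mem_smul_set.1 hxmemF.1
    obtain ⟨a', haA', haeq'⟩ := Set.mem_smul_set.1 hxmemFd.1
    have hxKmem : x F ∈ K := hKcomp.isClosed.frontier_subset hxmemF.2
    have hxKd : x (dualFace P F) ∈ polarSet K :=
      (isClosed_polarSet K).frontier_subset hxmemFd.2
    have hip : ⟪x F, x (dualFace P F)⟫ = t F * t (dualFace P F) := by
      rw [← haeq, ← haeq', real_inner_smul_left, real_inner_smul_right,
        hcond a haA a' haA']
      ring
    have hle : t F * t (dualFace P F) ≤ 1 := by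
      rw [← hip]
      exact hxKd (x F) hxKmem
    -- separation for the lower bound
    have hlineT : ∀ z ∈ t F • A F, ∀ z' ∈ t F • A F, ∀ s : ℝ,
        z + s • (z' - z) ∈ t F • A F := by
      rintro z ⟨z₀, hz₀, rfl⟩ z' ⟨z₀', hz₀', rfl⟩ s
      refine ⟨z₀ + s • (z₀' - z₀), hlineA _ hz₀ _ hz₀' s, ?_⟩
      show t F • (z₀ + s • (z₀' - z₀)) = t F • z₀ + s • (t F • z₀' - t F • z₀)
      rw [smul_add, smul_comm (t F) s, smul_sub]
    have hconvT : Convex ℝ (t F • A F) := by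
      intro z hz z' hz' az bz haz hbz habz
      have h1 := hlineT z hz z' hz' bz
      have halg : az • z + bz • z' = z + bz • (z' - z) := by
        have h2 : az = 1 - bz := by linarith
        rw [h2, sub_smul, one_smul, smul_sub]
        abel
      rw [halg]
      exact h1
    have hneT : (t F • A F).Nonempty := ⟨t F • c F, Set.smul_mem_smul_set hcFA⟩
    obtain ⟨w, hwK, hwA⟩ := sep_affine_of_disjoint_interior hlineT hconvT hneT
      hKconv h0K' hdisjF
    have hwmem : ∀ z ∈ A F, ⟪z, t F • w⟫ = 1 := by
      intro z hz
      rw [real_inner_smul_right, ← real_inner_smul_left]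
      exact hwA _ (Set.smul_mem_smul_set hz)
    have hwAFd : t F • w ∈ A (dualFace P F) :=
      dual_affine_complete hSA hSAd hcFdA hcond hcFA hrank hwmem
    have hwpol : w ∈ polarSet K := hwK
    have h0pol : (0 : Euc n) ∈ interior (polarSet K) :=
      zero_mem_interior_polarSet hKcomp.isBounded
    have hge : 1 ≤ t F * t (dualFace P F) := by
      by_contra hlt
      push_neg at hlt
      have hprodpos : 0 ≤ t (dualFace P F) * t F :=
        le_of_lt (mul_pos htFdpos htFpos)
      have hcombo : (t (dualFace P F) * t F) • w ∈ interior (polarSet K) := by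
        have h1 := (convex_polarSet K).combo_interior_self_mem_interior h0pol hwpol
          (show (0:ℝ) < 1 - t (dualFace P F) * t F by rw [mul_comm]; linarith)
          hprodpos (by ring)
        rwa [smul_zero, zero_add] at h1
      have hmem3 : (t (dualFace P F) * t F) • w ∈
          (t (dualFace P F) • A (dualFace P F)) ∩ interior (polarSet K) := by
        refine ⟨?_, hcombo⟩
        rw [← smul_smul]
        exact Set.smul_mem_smul_set hwAFd
      rw [hdisjFd] at hmem3
      exact hmem3
    have heq : t F * t (dualFace P F) = 1 := le_antisymm hle hge
    refine ⟨hip.trans heq, ?_⟩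
    have hipy : ⟪y F, y (dualFace P F)⟫ = t F * t (dualFace P F) := by
      rw [hyF, hyFd, real_inner_smul_left, real_inner_smul_right,
        hcond _ hcFA _ hcFdA]
      ring
    exact hipy.trans heq
  · -- Part 2: quantitative stability
    obtain ⟨S₀, hPeq⟩ := hP
    obtain ⟨u, b, -, hu0, hsup, hex, hFeq, hFne⟩ := id hF
    have hcFF : c F ∈ F := intrinsicInterior_subset hcrel
    have hcb : ⟪c F, u⟫ = b := by
      have h1 : c F ∈ {x ∈ P | ⟪x, u⟫ = b} := by rw [← hFeq]; exact hcFF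
      exact h1.2
    obtain ⟨C, δ₀, hC, hδ₀, hmain⟩ := quantitative_core hPeq h0P hSA hAPF hu0 hsup hcb
    refine ⟨C, δ₀, hC, hδ₀, ?_⟩
    intro K hK h0K t x y hx hδ
    obtain ⟨hKconv, hKcomp, hKint⟩ := hK
    have h0K' : (0 : Euc n) ∈ interior K := interior_mono Set.inter_subset_right h0K
    obtain ⟨⟨htFpos, hdisjF, hxmemF, -⟩, hyF⟩ := hx F hF
    have hres := hmain K hKconv hKcomp h0K' (t F) (x F) htFpos hdisjF hxmemF hδ
    refine ⟨hres.1, ?_⟩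
    have hyval : ‖y F - c F‖ = |t F - 1| * ‖c F‖ := by
      rw [hyF]
      rw [show t F • c F - c F = (t F - 1) • c F by rw [sub_smul, one_smul]]
      rw [norm_smul, Real.norm_eq_abs]
    rw [hyval]
    exact hres.2
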